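/- Let γ be a nontrivial template whose internal graph g(γ) contains the subgraph of a connected component, and let μ be a connected template with μ ≠ γ. Then there exists a vertex w ∈ g(γ) and a bond or leg n incident to w such that γ(n) ≠ μ(n). -/

import Mathlib

/-- Vertices of the 2×2×2 cube. -/
abbrev CubeVertex := Fin 3 → Fin 2

/-- The two directions perpendicular to a given direction. -/
def others : Fin 3 → Fin 3 × Fin 3 := fun d =>
  if d = 0 then (1, 2) else if d = 1 then (0, 2) else (0, 1)

/-- The 12 bonds of the cubic contraction. -/
abbrev Bond := Fin 3 × Fin 2 × Fin 2

/-- The 24 external legs of the cubic contraction. -/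
abbrev Leg := CubeVertex × Fin 3

/-- The 36 labels: 12 bonds and 24 legs. -/
abbrev Label := Bond ⊕ Leg

/-- The endpoint of a bond on side `s` of its direction. -/
def bondVertex (b : Bond) (s : Fin 2) : CubeVertex := fun d' =>
  if d' = b.1 then s else if d' = (others b.1).1 then b.2.1 else b.2.2

/-- Incidence of a vertex with a bond or leg. -/
def Incident (v : CubeVertex) : Label → Prop
  | Sum.inl b => v = bondVertex b 0 ∨ v = bondVertex b 1
  | Sum.inr l => v = l.1

/-- A template. -/
abbrev Template := Label → Bool

/-- Vertex set of the internal graph of a template. -/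
def Vset (γ : Template) : Set CubeVertex := {v | ∃ l, γ l = true ∧ Incident v l}

/-- The internal graph of a template, as a simple graph on the cube vertices. -/
def templGraph (γ : Template) : SimpleGraph CubeVertex where
  Adj v w := v ≠ w ∧ ∃ b : Bond, γ (Sum.inl b) = true ∧
    ((v = bondVertex b 0 ∧ w = bondVertex b 1) ∨
     (v = bondVertex b 1 ∧ w = bondVertex b 0))
  symm := ⟨by
    rintro v w ⟨hne, b, hb, h⟩
    exact ⟨hne.symm, b, hb, by tauto⟩⟩
  loopless := ⟨fun v h => h.1 rfl⟩

/-- A template is connected if its internal graph (induced on its vertex set)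
is connected. -/
def TConnected (γ : Template) : Prop :=
  ((templGraph γ).induce (Vset γ)).Connected


/-- Every label has an incident vertex. -/
def point : Label → CubeVertex
  | Sum.inl b => bondVertex b 0
  | Sum.inr l => l.1

lemma incident_point (l : Label) : Incident (point l) l := by
  cases l with
  | inl b => exact Or.inl rfl
  | inr l => rfl

lemma walk_cross {V : Type*} {G : SimpleGraph V} (P : V → Prop) :
    ∀ {x y : V}, G.Walk x y → ¬ P x → P y →
      ∃ a b, G.Adj a b ∧ ¬ P a ∧ P b := by
  intro x y w
  induction w with
  | nil => intro h h'; exact absurd h' h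
  | @cons a c y h p ih =>
    intro hx hy
    by_cases hc : P c
    · exact ⟨a, c, h, hx, hc⟩
    · exact ih hc hy

/-- Lemma 5.5: if `μ` is a connected template and `γ` is a nontrivial template
with `γ ≠ μ`, then some vertex of the internal graph of `γ` has an incident
bond or leg on which `γ` and `μ` disagree. -/
theorem exists_disagreeing_vertex (γ μ : Template)
    (hγ : (Vset γ).Nonempty) (hμ : TConnected μ) (hne : γ ≠ μ) :
    ∃ w ∈ Vset γ, ∃ l : Label, Incident w l ∧ γ l ≠ μ l := by
  by_contra hcon
  push_neg at hcon
  -- every label incident to a vertex of Vset γ agrees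
  have hagree : ∀ w ∈ Vset γ, ∀ l, Incident w l → γ l = μ l := hcon
  obtain ⟨l0, hl0⟩ : ∃ l, γ l ≠ μ l := by
    by_contra h
    push_neg at h
    exact hne (funext h)
  set u := point l0 with hu_def
  have hinc : Incident u l0 := incident_point l0
  have huγ : u ∉ Vset γ := fun h => hl0 (hagree u h l0 hinc)
  have hγl0 : γ l0 = false := by
    by_contra h
    exact huγ ⟨l0, by simpa using h, hinc⟩
  have hμl0 : μ l0 = true := by
    cases h : μ l0
    · exact absurd (hγl0.trans h.symm) hl0
    · rfl
  have huμ : u ∈ Vset μ := ⟨l0, hμl0, hinc⟩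
  obtain ⟨v, hvγ⟩ := hγ
  have hvμ : v ∈ Vset μ := by
    obtain ⟨l, hl, hlinc⟩ := hvγ
    exact ⟨l, (hagree v ⟨l, hl, hlinc⟩ l hlinc) ▸ hl, hlinc⟩
  obtain ⟨w⟩ := hμ.preconnected ⟨u, huμ⟩ ⟨v, hvμ⟩
  obtain ⟨a, b, hab, haP, hbP⟩ :=
    walk_cross (fun x : ↥(Vset μ) => (x : CubeVertex) ∈ Vset γ) w huγ hvγ
  obtain ⟨hne', b0, hb0, hcase⟩ := hab
  have hbinc : Incident (b : CubeVertex) (Sum.inl b0) := by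
    rcases hcase with ⟨_, h2⟩ | ⟨_, h2⟩
    · exact Or.inr h2
    · exact Or.inl h2
  have hγb0 : γ (Sum.inl b0) = true :=
    (hagree b hbP (Sum.inl b0) hbinc).trans hb0
  apply haP
  rcases hcase with ⟨h1, _⟩ | ⟨h1, _⟩
  · exact ⟨Sum.inl b0, hγb0, Or.inl h1⟩
  · exact ⟨Sum.inl b0, hγb0, Or.inr h1⟩
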